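/- Let X, Y, Z be locally compact Hausdorff spaces, let π : X → Z and τ : Y → Z be continuous open surjections, and for each z ∈ Z let λ_z be a positive Radon measure on X with λ_z(X ∖ π⁻¹(z)) = 0. Then the following are equivalent: (a) for every continuous compactly supported f : X → ℂ, the function z ↦ ∫_X f dλ_z is continuous on Z; (b) for every continuous compactly supported F : X × Y → ℂ, the function y ↦ ∫_X F(x, y) dλ_{τ(y)}(x) is continuous on Y. (Statement (b) says that the family of measures λ₂_y = λ_{τ(y)} × δ_y along the second projection of the fibre product X ×_Z Y is continuous.) -/

import Mathlib

open MeasureTheory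

/-- Renault, Lemme 1.2: for continuous open surjections `π : X → Z`,
`τ : Y → Z` and a family `(λ_z)` of Radon measures concentrated on the fibres of `π`,
the family `(λ_z)` is continuous along `π` iff the family `λ₂_y = λ_{τ(y)} × δ_y`
along the second projection of the fibre product is continuous; the latter amounts to
continuity of `y ↦ ∫ F(x, y) dλ_{τ(y)}(x)` for all `F ∈ C_c(X × Y)`. -/
theorem continuous_family_iff_fibre_product_family_continuous
    {X Y Z : Type*} [TopologicalSpace X] [LocallyCompactSpace X] [T2Space X]
    [TopologicalSpace Y] [LocallyCompactSpace Y] [T2Space Y]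
    [TopologicalSpace Z] [LocallyCompactSpace Z] [T2Space Z]
    [MeasurableSpace X] [BorelSpace X]
    (π : X → Z) (hπ : Continuous π) (hπopen : IsOpenMap π)
    (hπsurj : Function.Surjective π)
    (τ : Y → Z) (hτ : Continuous τ) (hτopen : IsOpenMap τ)
    (hτsurj : Function.Surjective τ)
    (lam : Z → Measure X) (hRadon : ∀ z, (lam z).Regular)
    (hfib : ∀ z, lam z (π ⁻¹' {z})ᶜ = 0) :
    (∀ f : X → ℂ, Continuous f → HasCompactSupport f →
        Continuous fun z => ∫ x, f x ∂(lam z)) ↔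
    (∀ F : X × Y → ℂ, Continuous F → HasCompactSupport F →
        Continuous fun y => ∫ x, F (x, y) ∂(lam (τ y))) := by
  have hint : ∀ (g : X → ℂ), Continuous g → HasCompactSupport g → ∀ z,
      Integrable g (lam z) := by
    intro g hg hgc z
    haveI := hRadon z
    exact hg.integrable_of_hasCompactSupport hgc
  have hintR : ∀ (g : X → ℝ), Continuous g → HasCompactSupport g → ∀ z,
      Integrable g (lam z) := by
    intro g hg hgc z
    haveI := hRadon z
    exact hg.integrable_of_hasCompactSupport hgc
  constructor
  · intro ha F hF hFc
    set K : Set (X × Y) := tsupport F with hKdef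
    have hKc : IsCompact K := hFc
    have hK1c : IsCompact (Prod.fst '' K) := hKc.image continuous_fst
    set K1 : Set X := Prod.fst '' K with hK1def
    have hK1closed : IsClosed K1 := hK1c.isClosed
    -- the slices are continuous with compact support
    have hslice_cont : ∀ y : Y, Continuous fun x => F (x, y) := fun y =>
      hF.comp (continuous_id.prodMk continuous_const)
    have hslice_supp : ∀ y : Y, HasCompactSupport fun x => F (x, y) := by
      intro y
      apply HasCompactSupport.intro' hK1c hK1closed
      intro x hx
      by_contra h
      exact hx ⟨(x, y), subset_tsupport F h, rfl⟩
    -- the cutoff function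
    obtain ⟨φ, hφ1, -, hφc, hφ01⟩ :=
      exists_continuous_one_zero_of_isCompact hK1c isClosed_empty (Set.disjoint_empty _)
    -- continuity of z ↦ ∫ φ dλ_z
    have hφC : Continuous fun z => ∫ x, ((φ x : ℝ) : ℂ) ∂(lam z) :=
      ha _ (Complex.continuous_ofReal.comp φ.continuous)
        (hφc.comp_left (g := (Complex.ofReal)) Complex.ofReal_zero)
    have hb : Continuous fun z => ∫ x, φ x ∂(lam z) := by
      have : (fun z => ∫ x, φ x ∂(lam z))
          = fun z => (∫ x, ((φ x : ℝ) : ℂ) ∂(lam z)).re := by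
        funext z
        have h := integral_ofReal (𝕜 := ℂ) (f := fun x => φ x) (μ := lam z)
        exact ((congrArg Complex.re h).trans (Complex.ofReal_re _)).symm
      rw [this]
      exact Complex.continuous_re.comp hφC
    rw [continuous_iff_continuousAt]
    intro y0
    rw [ContinuousAt, Metric.tendsto_nhds]
    intro ε hε
    have hb0 : (0:ℝ) ≤ ∫ x, φ x ∂(lam (τ y0)) :=
      integral_nonneg fun x => (hφ01 x).1
    set B : ℝ := (∫ x, φ x ∂(lam (τ y0))) + 1 with hBdef
    have hBpos : 0 < B := by positivity
    set ε' : ℝ := ε / (2 * B) with hε'def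
    have hε'pos : 0 < ε' := by positivity
    -- tube lemma
    have hUopen : IsOpen {p : X × Y | ‖F p - F (p.1, y0)‖ < ε'} := by
      apply isOpen_lt _ continuous_const
      exact (hF.sub (hF.comp (continuous_fst.prodMk continuous_const))).norm
    have htube : K1 ×ˢ ({y0} : Set Y) ⊆ {p : X × Y | ‖F p - F (p.1, y0)‖ < ε'} := by
      rintro ⟨x, y⟩ ⟨-, rfl⟩
      simpa using hε'pos
    obtain ⟨V, W, hVopen, hWopen, hK1V, hy0W, hVW⟩ :=
      generalized_tube_lemma hK1c isCompact_singleton hUopen htube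
    -- three eventual facts
    have E1 : ∀ᶠ y in nhds y0, y ∈ W :=
      Filter.eventually_mem_set.mpr (hWopen.mem_nhds (hy0W rfl))
    have E2 : ∀ᶠ y in nhds y0, (∫ x, φ x ∂(lam (τ y))) < B := by
      have h1 : ContinuousAt (fun y => ∫ x, φ x ∂(lam (τ y))) y0 :=
        (hb.comp hτ).continuousAt
      exact h1.eventually (eventually_lt_nhds (by simp [hBdef]))
    have E3 : ∀ᶠ y in nhds y0,
        dist (∫ x, F (x, y0) ∂(lam (τ y))) (∫ x, F (x, y0) ∂(lam (τ y0))) < ε / 2 := by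
      have h1 : ContinuousAt (fun y => ∫ x, F (x, y0) ∂(lam (τ y))) y0 :=
        ((ha _ (hslice_cont y0) (hslice_supp y0)).comp hτ).continuousAt
      have := Metric.tendsto_nhds.mp h1 (ε / 2) (by positivity)
      exact this
    filter_upwards [E1, E2, E3] with y hyW hby h3
    -- main estimate
    have int1 := hint _ (hslice_cont y) (hslice_supp y) (τ y)
    have int2 := hint _ (hslice_cont y0) (hslice_supp y0) (τ y)
    have intφ := hintR _ φ.continuous hφc (τ y)
    have hpt : ∀ x, ‖F (x, y) - F (x, y0)‖ ≤ ε' * φ x := by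
      intro x
      by_cases hx : x ∈ K1
      · have hlt : ‖F (x, y) - F (x, y0)‖ < ε' := hVW ⟨hK1V hx, hyW⟩
        calc ‖F (x, y) - F (x, y0)‖ ≤ ε' := hlt.le
          _ = ε' * φ x := by rw [hφ1 hx]; simp
      · have h1 : F (x, y) = 0 := by
          by_contra h
          exact hx ⟨(x, y), subset_tsupport F h, rfl⟩
        have h2 : F (x, y0) = 0 := by
          by_contra h
          exact hx ⟨(x, y0), subset_tsupport F h, rfl⟩
        rw [h1, h2, sub_zero, norm_zero]
        exact mul_nonneg hε'pos.le (hφ01 x).1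
    have key : ‖(∫ x, F (x, y) ∂(lam (τ y))) - ∫ x, F (x, y0) ∂(lam (τ y))‖
        ≤ ε' * ∫ x, φ x ∂(lam (τ y)) := by
      rw [← integral_sub int1 int2]
      calc ‖∫ x, (F (x, y) - F (x, y0)) ∂(lam (τ y))‖
          ≤ ∫ x, ‖F (x, y) - F (x, y0)‖ ∂(lam (τ y)) := norm_integral_le_integral_norm _
        _ ≤ ∫ x, ε' * φ x ∂(lam (τ y)) :=
            integral_mono (int1.sub int2).norm (intφ.const_mul ε') hpt
        _ = ε' * ∫ x, φ x ∂(lam (τ y)) := integral_const_mul _ _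
    have key2 : dist (∫ x, F (x, y) ∂(lam (τ y))) (∫ x, F (x, y0) ∂(lam (τ y))) < ε / 2 := by
      rw [dist_eq_norm]
      calc ‖(∫ x, F (x, y) ∂(lam (τ y))) - ∫ x, F (x, y0) ∂(lam (τ y))‖
          ≤ ε' * ∫ x, φ x ∂(lam (τ y)) := key
        _ < ε' * B := by exact mul_lt_mul_of_pos_left hby hε'pos
        _ = ε / 2 := by rw [hε'def, div_mul_eq_mul_div]; exact mul_div_mul_right ε 2 hBpos.ne'
    calc dist (∫ x, F (x, y) ∂(lam (τ y))) (∫ x, F (x, y0) ∂(lam (τ y0)))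
        ≤ dist (∫ x, F (x, y) ∂(lam (τ y))) (∫ x, F (x, y0) ∂(lam (τ y)))
          + dist (∫ x, F (x, y0) ∂(lam (τ y))) (∫ x, F (x, y0) ∂(lam (τ y0))) :=
          dist_triangle _ _ _
      _ < ε / 2 + ε / 2 := add_lt_add key2 h3
      _ = ε := by ring
  · intro hbig f hf hfc
    have hq : Topology.IsQuotientMap τ := hτopen.isQuotientMap hτ hτsurj
    rw [hq.continuous_iff]
    rw [continuous_iff_continuousAt]
    intro y0
    obtain ⟨K, hKc, hKn⟩ := exists_compact_mem_nhds y0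
    obtain ⟨g, hg1, -, hgc, hg01⟩ :=
      exists_continuous_one_zero_of_isCompact hKc isClosed_empty (Set.disjoint_empty _)
    set F : X × Y → ℂ := fun p => f p.1 * ((g p.2 : ℝ) : ℂ) with hFdef
    have hFcont : Continuous F :=
      (hf.comp continuous_fst).mul
        (Complex.continuous_ofReal.comp (g.continuous.comp continuous_snd))
    have hFsupp : HasCompactSupport F := by
      have hsub : tsupport F ⊆ tsupport f ×ˢ tsupport g := by
        have h1 : Function.support F ⊆ Function.support f ×ˢ Function.support g := by
          intro p hp
          refine ⟨fun h => hp ?_, fun h => hp ?_⟩ <;> simp [hFdef, h]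
        calc tsupport F ⊆ closure (Function.support f ×ˢ Function.support g) :=
              closure_mono h1
          _ = tsupport f ×ˢ tsupport g := closure_prod_eq
      exact IsCompact.of_isClosed_subset (hfc.prod hgc) (isClosed_tsupport F) hsub
    have HB := hbig F hFcont hFsupp
    apply HB.continuousAt.congr
    filter_upwards [hKn] with y hy
    have : g y = 1 := hg1 hy
    simp only [hFdef, Function.comp]
    rw [this]
    simp [integral_mul_const]
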